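/- Let G be an arbitrary Lie group with a norm ‖·‖ on Lie(G) and r₀ > 0 such that log is defined on B_{r₀} = exp({v : ‖v‖ < r₀}). Let Γ be a discrete subgroup of G, {u_t} a one-parameter unipotent subgroup, x ∈ G/Γ. Then for any T > 0 and 0 < δ < r₀, the set {t ∈ [0,T] : G_{u_t x} ∩ B_δ ≠ {e}} has finitely many connected components. -/

import Mathlib

open Set Metric Polynomial

/-- A uniformly separated subset of a bounded interval is finite. -/
private lemma aux_sep_finite {T η : ℝ} (hη : 0 < η) {s : Set ℝ}
    (hsub : s ⊆ Set.Icc 0 T) (hsep : ∀ x ∈ s, ∀ y ∈ s, x ≠ y → η ≤ |x - y|) :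
    s.Finite := by
  have hinj : Set.InjOn (fun x => ⌊x / η⌋) s := by
    intro x hx y hy hxy
    by_contra hne
    have h1 := hsep x hx y hy hne
    have hx1 : (⌊x / η⌋ : ℝ) ≤ x / η := Int.floor_le _
    have hx2 : x / η < ⌊x / η⌋ + 1 := Int.lt_floor_add_one _
    have hy1 : (⌊y / η⌋ : ℝ) ≤ y / η := Int.floor_le _
    have hy2 : y / η < ⌊y / η⌋ + 1 := Int.lt_floor_add_one _
    have hfe : (⌊x / η⌋ : ℝ) = (⌊y / η⌋ : ℝ) := by exact_mod_cast congrArg Int.cast hxy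
    have habs : |x / η - y / η| < 1 := by
      rw [abs_lt]; constructor <;> nlinarith
    have : |x - y| < η := by
      have hxy' : x - y = (x / η - y / η) * η := by field_simp
      calc |x - y| = |x / η - y / η| * |η| := by rw [hxy', abs_mul]
        _ = |x / η - y / η| * η := by rw [abs_of_pos hη]
        _ < 1 * η := mul_lt_mul_of_pos_right habs hη
        _ = η := one_mul η
    linarith
  apply Set.Finite.of_finite_image _ hinj
  apply Set.Finite.subset (Set.finite_Icc (⌊(0:ℝ)/η⌋) ⌈T/η⌉)
  rintro z ⟨x, hx, rfl⟩
  obtain ⟨hx0, hxT⟩ := hsub hx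
  constructor
  · simp only [zero_div]
    exact Int.floor_le_floor (by positivity)
  · calc ⌊x / η⌋ ≤ ⌊T / η⌋ := Int.floor_le_floor (by gcongr)
      _ ≤ ⌈T / η⌉ := Int.floor_le_ceil _

/-- If a set is covered by a finite family of preconnected subsets of it,
then it has finitely many connected components. -/
private lemma aux_comp_finite_of_cover {α : Type*} [TopologicalSpace α] {S : Set α}
    {P : Set (Set α)} (hP : P.Finite) (hPS : ∀ p ∈ P, p ⊆ S ∧ IsPreconnected p)
    (hcov : S ⊆ ⋃₀ P) :
    {C | ∃ t ∈ S, C = connectedComponentIn S t}.Finite := by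
  apply Set.Finite.subset (hP.image (fun p => ⋃ t ∈ p, connectedComponentIn S t))
  rintro C ⟨t, htS, rfl⟩
  obtain ⟨p, hpP, htp⟩ := hcov htS
  refine ⟨p, hpP, ?_⟩
  have hsub : p ⊆ connectedComponentIn S t :=
    (hPS p hpP).2.subset_connectedComponentIn htp (hPS p hpP).1
  have hCeq : ∀ t' ∈ p, connectedComponentIn S t' = connectedComponentIn S t :=
    fun t' ht' => (connectedComponentIn_eq (hsub ht')).symm
  ext x
  simp only [Set.mem_iUnion]
  constructor
  · rintro ⟨t', ht', hx⟩; rwa [hCeq t' ht'] at hx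
  · intro hx; exact ⟨t, htp, hx⟩

/-- The strict sublevel set of a continuous function with finitely many zeros,
inside a compact interval, has finitely many connected components. -/
private lemma aux_sublevel {T : ℝ} (hT : 0 < T) {c : ℝ → ℝ} (hc : Continuous c)
    (hz : {x : ℝ | c x = 0}.Finite) :
    {C | ∃ t ∈ {s ∈ Set.Icc 0 T | c s < 0},
      C = connectedComponentIn {s ∈ Set.Icc 0 T | c s < 0} t}.Finite := by
  set U : Set ℝ := {s ∈ Set.Icc 0 T | c s < 0} with hU
  -- basic facts about components
  have hUIcc : U ⊆ Set.Icc 0 T := fun s hs => hs.1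
  -- relative openness: around any point of U there is a small interval inside U
  have hopen : ∀ t ∈ U, ∃ ε > 0, ∀ y, |y - t| ≤ ε → y ∈ Set.Icc 0 T → y ∈ U := by
    intro t ht
    have hct : c t < 0 := ht.2
    have := Metric.continuous_iff.mp hc t (-(c t)) (by linarith)
    obtain ⟨ε, hε, hball⟩ := this
    refine ⟨ε / 2, by linarith, fun y hy hyI => ⟨hyI, ?_⟩⟩
    have : dist (c y) (c t) < -(c t) := hball y (by rw [Real.dist_eq]; linarith)
    rw [Real.dist_eq, abs_lt] at this
    linarith
  -- for each component, there is x ∈ C with sInf C < x, and the component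
  -- contains (sInf C, x)
  have hcomp : ∀ t ∈ U, ∃ x ∈ connectedComponentIn U t, sInf (connectedComponentIn U t) < x := by
    intro t ht
    set C := connectedComponentIn U t with hC
    have htC : t ∈ C := mem_connectedComponentIn ht
    have hCU : C ⊆ U := connectedComponentIn_subset U t
    have hbdd : BddBelow C := ⟨0, fun y hy => (hUIcc (hCU hy)).1⟩
    obtain ⟨ε, hε, hloc⟩ := hopen t ht
    have ht0 : 0 ≤ t := (hUIcc ht).1
    have htT : t ≤ T := (hUIcc ht).2
    by_cases hcase : t < T
    · -- x := min (t + ε) T > t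
      set x := min (t + ε) T with hx
      have hxt : t < x := lt_min (by linarith) hcase
      have hIcc : Set.Icc t x ⊆ U := by
        intro y hy
        refine hloc y ?_ ⟨le_trans ht0 hy.1, le_trans hy.2 (min_le_right _ _)⟩
        rw [abs_le]
        constructor
        · linarith [hy.1]
        · have := le_trans hy.2 (min_le_left _ _); linarith
      have hxC : x ∈ C := by
        have : Set.Icc t x ⊆ C :=
          isPreconnected_Icc.subset_connectedComponentIn ⟨le_refl t, le_of_lt hxt⟩ hIcc
        exact this ⟨le_of_lt hxt, le_refl x⟩
      exact ⟨x, hxC, lt_of_le_of_lt (csInf_le hbdd htC) hxt⟩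
    · -- t = T; go left
      have htT' : t = T := le_antisymm htT (not_lt.mp hcase)
      set y := max (t - ε) 0 with hy
      have hyt : y < t := by
        apply max_lt (by linarith)
        rw [htT']; exact hT
      have hIcc : Set.Icc y t ⊆ U := by
        intro z hz
        refine hloc z ?_ ⟨le_trans (le_max_right _ _) hz.1, le_trans hz.2 htT⟩
        rw [abs_le]
        constructor
        · linarith [hz.1, le_max_left (t - ε) 0]
        · linarith [hz.2]
      have hyC : y ∈ C := by
        have : Set.Icc y t ⊆ C :=
          isPreconnected_Icc.subset_connectedComponentIn ⟨le_of_lt hyt, le_refl t⟩ hIcc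
        exact this ⟨le_refl y, le_of_lt hyt⟩
      exact ⟨t, htC, lt_of_le_of_lt (csInf_le hbdd hyC) hyt⟩
  -- map each component to its infimum
  apply Set.Finite.of_finite_image (f := sInf)
  · -- image is contained in {0} ∪ zeros of c
    apply Set.Finite.subset (Set.Finite.insert 0 hz)
    rintro a ⟨C, ⟨t, ht, rfl⟩, rfl⟩
    set C := connectedComponentIn U t with hC
    have htC : t ∈ C := mem_connectedComponentIn ht
    have hCU : C ⊆ U := connectedComponentIn_subset U t
    have hne : C.Nonempty := ⟨t, htC⟩
    have hbdd : BddBelow C := ⟨0, fun y hy => (hUIcc (hCU hy)).1⟩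
    set a := sInf C with ha
    have hacl : a ∈ closure C := csInf_mem_closure hne hbdd
    have haIcc : a ∈ Set.Icc 0 T := by
      have : closure C ⊆ Set.Icc 0 T :=
        closure_minimal (fun y hy => hUIcc (hCU hy)) isClosed_Icc
      exact this hacl
    have hca : c a ≤ 0 := by
      have h1 : closure C ⊆ {x | c x ≤ 0} := by
        apply closure_minimal (fun y hy => le_of_lt (hCU hy).2)
        exact isClosed_le hc continuous_const
      exact h1 hacl
    by_contra hcon
    simp only [Set.mem_insert_iff, Set.mem_setOf_eq] at hcon
    push_neg at hcon
    have ha0 : 0 < a := lt_of_le_of_ne haIcc.1 (Ne.symm hcon.1)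
    have hcaneg : c a < 0 := lt_of_le_of_ne hca hcon.2
    have haU : a ∈ U := ⟨haIcc, hcaneg⟩
    obtain ⟨ε, hε, hloc⟩ := hopen a haU
    set ε' := min ε (a / 2) with hε'
    have hε'pos : 0 < ε' := lt_min hε (by linarith)
    obtain ⟨t', ht'C, ht'lt⟩ := exists_lt_of_csInf_lt hne (show sInf C < a + ε' by linarith)
    have hat' : a ≤ t' := csInf_le hbdd ht'C
    have hIcc : Set.Icc (a - ε') t' ⊆ U := by
      intro z hz
      have hz1 : a - ε' ≤ z := hz.1
      have hz2 : z ≤ t' := hz.2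
      have hεle : ε' ≤ ε := min_le_left _ _
      refine hloc z ?_ ?_
      · rw [abs_le]
        constructor
        · linarith
        · linarith
      · constructor
        · have : ε' ≤ a / 2 := min_le_right _ _; linarith
        · exact le_trans hz2 (hUIcc (hCU ht'C)).2
    have hsubC : Set.Icc (a - ε') t' ⊆ C := by
      have h1 : Set.Icc (a - ε') t' ⊆ connectedComponentIn U t' :=
        isPreconnected_Icc.subset_connectedComponentIn
          ⟨by linarith, le_refl t'⟩ hIcc
      rwa [← connectedComponentIn_eq (show t' ∈ C from ht'C)] at h1
    have : a ≤ a - ε' := csInf_le hbdd (hsubC ⟨le_refl _, by linarith⟩)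
    linarith
  · -- injectivity of sInf on components
    rintro C ⟨t, ht, rfl⟩ C' ⟨t', ht', rfl⟩ heq
    by_contra hne'
    -- distinct components are disjoint
    have hdisj : Disjoint (connectedComponentIn U t) (connectedComponentIn U t') := by
      rw [Set.disjoint_iff_inter_eq_empty]
      by_contra hint
      obtain ⟨z, hz1, hz2⟩ := Set.nonempty_iff_ne_empty.mpr hint
      exact hne' ((connectedComponentIn_eq hz1).trans (connectedComponentIn_eq hz2).symm)
    obtain ⟨x, hxC, hax⟩ := hcomp t ht
    obtain ⟨x', hxC', hax'⟩ := hcomp t' ht'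
    set a := sInf (connectedComponentIn U t) with ha
    have hne1 : (connectedComponentIn U t).Nonempty := ⟨t, mem_connectedComponentIn ht⟩
    have hne2 : (connectedComponentIn U t').Nonempty := ⟨t', mem_connectedComponentIn ht'⟩
    have hord1 : Set.OrdConnected (connectedComponentIn U t) :=
      isPreconnected_connectedComponentIn.ordConnected
    have hord2 : Set.OrdConnected (connectedComponentIn U t') :=
      isPreconnected_connectedComponentIn.ordConnected
    set w := a + min (x - a) (x' - a) / 2 with hw
    have hw1 : a < w := by
      have := lt_min (sub_pos.mpr hax) (sub_pos.mpr (heq ▸ hax'))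
      simp only [hw]; linarith [lt_min (sub_pos.mpr hax) (sub_pos.mpr (heq ▸ hax'))]
    have hwx : w < x := by
      have h1 : min (x - a) (x' - a) ≤ x - a := min_le_left _ _
      have h2 : (0:ℝ) < min (x - a) (x' - a) :=
        lt_min (sub_pos.mpr hax) (sub_pos.mpr (heq ▸ hax'))
      simp only [hw]; linarith
    have hwx' : w < x' := by
      have h1 : min (x - a) (x' - a) ≤ x' - a := min_le_right _ _
      have h2 : (0:ℝ) < min (x - a) (x' - a) :=
        lt_min (sub_pos.mpr hax) (sub_pos.mpr (heq ▸ hax'))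
      simp only [hw]; linarith
    have hwC : w ∈ connectedComponentIn U t := by
      obtain ⟨z, hz, hzw⟩ := exists_lt_of_csInf_lt hne1 (show sInf _ < w from hw1)
      exact hord1.out hz hxC ⟨le_of_lt hzw, le_of_lt hwx⟩
    have hwC' : w ∈ connectedComponentIn U t' := by
      obtain ⟨z, hz, hzw⟩ := exists_lt_of_csInf_lt hne2 (show sInf _ < w by rw [← heq]; exact hw1)
      exact hord2.out hz hxC' ⟨le_of_lt hzw, le_of_lt hwx'⟩
    exact absurd (Set.disjoint_iff.mp hdisj ⟨hwC, hwC'⟩) (Set.notMem_empty w)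

private lemma aux_exists_poly_inner {𝔤 : Type*} [NormedAddCommGroup 𝔤] [InnerProductSpace ℝ 𝔤]
    (d : ℕ) (c : Fin d → 𝔤) (a : ℝ) (w : 𝔤) :
    ∃ q : Polynomial ℝ, ∀ s : ℝ,
      q.eval s = @inner ℝ _ _ w (∑ i : Fin d, (s - a) ^ (i : ℕ) • c i) := by
  refine ⟨∑ i : Fin d, Polynomial.C (@inner ℝ _ _ w (c i)) * (X - Polynomial.C a) ^ (i : ℕ), ?_⟩
  intro s
  rw [inner_sum, eval_finset_sum]
  congr 1
  ext i
  rw [real_inner_smul_right]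
  simp [mul_comm]

private lemma aux_norm_sq_eq_sum {𝔤 : Type*} [NormedAddCommGroup 𝔤] [InnerProductSpace ℝ 𝔤]
    [FiniteDimensional ℝ 𝔤] (w : 𝔤) :
    ‖w‖ ^ 2 = ∑ j, (@inner ℝ _ _ ((stdOrthonormalBasis ℝ 𝔤) j) w) ^ 2 := by
  set b := stdOrthonormalBasis ℝ 𝔤
  have h1 : ‖w‖ = ‖b.repr w‖ := (b.repr.norm_map w).symm
  rw [h1, EuclideanSpace.norm_eq, Real.sq_sqrt (by positivity)]
  congr 1
  ext j
  rw [← b.repr_apply_apply w j]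
  rw [Real.norm_eq_abs, sq_abs]

/-- difference of two "polynomial-shaped" curves has polynomial squared norm -/
private lemma aux_poly_diff {𝔤 : Type*} [NormedAddCommGroup 𝔤] [InnerProductSpace ℝ 𝔤]
    [FiniteDimensional ℝ 𝔤] (d d' : ℕ) (c : Fin d → 𝔤) (c' : Fin d' → 𝔤) (a a' : ℝ) :
    ∃ q : Polynomial ℝ, ∀ s : ℝ,
      q.eval s = ‖(∑ i : Fin d, (s - a) ^ (i : ℕ) • c i)
        - (∑ i : Fin d', (s - a') ^ (i : ℕ) • c' i)‖ ^ 2 := by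
  set b := stdOrthonormalBasis ℝ 𝔤
  choose q₁ hq₁ using fun j => aux_exists_poly_inner d c a (b j)
  choose q₂ hq₂ using fun j => aux_exists_poly_inner d' c' a' (b j)
  refine ⟨∑ j, (q₁ j - q₂ j) ^ 2, ?_⟩
  intro s
  rw [aux_norm_sq_eq_sum, eval_finset_sum]
  congr 1
  ext j
  rw [eval_pow, eval_sub, hq₁, hq₂, inner_sub_right]

/-- squared-norm of a single polynomial-shaped curve -/
private lemma aux_poly_normsq {𝔤 : Type*} [NormedAddCommGroup 𝔤] [InnerProductSpace ℝ 𝔤]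
    [FiniteDimensional ℝ 𝔤] (d : ℕ) (c : Fin d → 𝔤) (a : ℝ) :
    ∃ q : Polynomial ℝ, ∀ s : ℝ,
      q.eval s = ‖∑ i : Fin d, (s - a) ^ (i : ℕ) • c i‖ ^ 2 := by
  obtain ⟨q, hq⟩ := aux_poly_diff d 0 c (fun i => 0) a 0
  exact ⟨q, fun s => by simpa using hq s⟩
set_option maxHeartbeats 2000000 in
/-- Let `G` be a Lie group with Lie algebra `𝔤` (an inner product space), exponential map
`expMap` injective on the ball of radius `r₀`, and a one-parameter unipotent subgroup
`u : ℝ → G` whose adjoint action `Adu t` is polynomial in `t` and satisfies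
`u_t · exp(v) · u_t⁻¹ = exp(Adu t v)`. Let `Γ` be a discrete subgroup of `G` and
`x = gΓ ∈ G/Γ`, so that the stabilizer of `u_t x` is `u_t g Γ g⁻¹ u_t⁻¹`. Then for any
`T > 0` and `0 < δ < r₀`, the set `{t ∈ [0, T] : G_{u_t x} ∩ B_δ ≠ {e}}` has only
finitely many connected components. -/
theorem finitely_many_components_of_small_injectivity_radius
    {G : Type*} [Group G] [TopologicalSpace G] [IsTopologicalGroup G]
    {𝔤 : Type*} [NormedAddCommGroup 𝔤] [InnerProductSpace ℝ 𝔤] [FiniteDimensional ℝ 𝔤]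
    (expMap : 𝔤 → G) (hexpCont : Continuous expMap)
    (r₀ : ℝ) (hr₀ : 0 < r₀)
    (hinj : Set.InjOn expMap (Metric.ball 0 r₀))
    (Γ : Subgroup G) (hΓ : DiscreteTopology Γ)
    (u : ℝ → G) (hu : ∀ s t : ℝ, u (s + t) = u s * u t) (hucont : Continuous u)
    (Adu : ℝ → 𝔤 →ₗ[ℝ] 𝔤)
    (hAdpoly : ∀ v : 𝔤, ∃ (d : ℕ) (c : Fin d → 𝔤),
      ∀ t : ℝ, Adu t v = ∑ i : Fin d, t ^ (i : ℕ) • c i)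
    (hequiv : ∀ (t : ℝ) (v : 𝔤), u t * expMap v * (u t)⁻¹ = expMap (Adu t v))
    (g : G) (T δ : ℝ) (hT : 0 < T) (hδ0 : 0 < δ) (hδ : δ < r₀) :
    {C : Set ℝ |
      ∃ t ∈ {t ∈ Set.Icc (0 : ℝ) T | ∃ γ ∈ Γ, γ ≠ 1 ∧
        ∃ v ∈ Metric.ball (0 : 𝔤) δ, u t * (g * γ * g⁻¹) * (u t)⁻¹ = expMap v},
      C = connectedComponentIn
        {t ∈ Set.Icc (0 : ℝ) T | ∃ γ ∈ Γ, γ ≠ 1 ∧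
          ∃ v ∈ Metric.ball (0 : 𝔤) δ, u t * (g * γ * g⁻¹) * (u t)⁻¹ = expMap v}
        t}.Finite := by
  classical
  set S : Set ℝ := {t ∈ Set.Icc (0 : ℝ) T | ∃ γ ∈ Γ, γ ≠ 1 ∧
    ∃ v ∈ Metric.ball (0 : 𝔤) δ, u t * (g * γ * g⁻¹) * (u t)⁻¹ = expMap v} with hSdef
  -- basic facts about the one-parameter group
  have hu0 : u 0 = 1 := by
    have h := hu 0 0
    rw [add_zero] at h
    exact mul_eq_left.mp h.symm
  -- conjugation formula
  have hconj : ∀ (γ : G) (t₀ : ℝ) (v₀ : 𝔤) (s : ℝ),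
      u t₀ * (g * γ * g⁻¹) * (u t₀)⁻¹ = expMap v₀ →
      u s * (g * γ * g⁻¹) * (u s)⁻¹ = expMap (Adu (s - t₀) v₀) := by
    intro γ t₀ v₀ s h0
    have hus : u s = u (s - t₀) * u t₀ := by rw [← hu]; ring_nf
    rw [← hequiv (s - t₀) v₀, ← h0, hus, mul_inv_rev]
    group
  -- Adu 0 is the identity
  have hAdu0 : ∀ v : 𝔤, Adu 0 v = v := by
    intro v
    set M := max ‖v‖ ‖Adu 0 v‖ with hM
    have hM0 : (0:ℝ) ≤ M := le_max_of_le_left (norm_nonneg v)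
    set cp : ℝ := r₀ / (2 * (M + 1)) with hcp
    have hcppos : 0 < cp := by positivity
    have hb : ∀ x : 𝔤, ‖x‖ ≤ M → ‖cp • x‖ < r₀ := by
      intro x hx
      rw [norm_smul, Real.norm_eq_abs, abs_of_pos hcppos]
      have h2 : cp * M < r₀ := by
        rw [hcp, div_mul_eq_mul_div, div_lt_iff₀ (by positivity : (0:ℝ) < 2 * (M + 1))]
        nlinarith
      nlinarith [mul_le_mul_of_nonneg_left hx hcppos.le]
    have h1 : ‖cp • v‖ < r₀ := hb v (le_max_left _ _)
    have h1' : ‖cp • Adu 0 v‖ < r₀ := hb _ (le_max_right _ _)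
    have h3 : expMap (cp • Adu 0 v) = expMap (cp • v) := by
      have h := hequiv 0 (cp • v)
      rw [hu0, one_mul, inv_one, mul_one] at h
      rw [← map_smul, ← h]
    have h4 := hinj (mem_ball_zero_iff.mpr h1') (mem_ball_zero_iff.mpr h1) h3
    exact smul_right_injective 𝔤 (ne_of_gt hcppos) h4
  -- joint continuity of (t, v) ↦ Adu t v
  have hcont2 : Continuous (fun p : ℝ × 𝔤 => Adu p.1 p.2) := by
    set B := Module.finBasis ℝ 𝔤 with hB
    choose dd cc hcc using fun j => hAdpoly (B j)
    have hrepr : (fun p : ℝ × 𝔤 => Adu p.1 p.2)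
        = fun p => ∑ j, (B.coord j) p.2 • ∑ i : Fin (dd j), p.1 ^ (i : ℕ) • cc j i := by
      funext p
      conv_lhs => rw [← B.sum_repr p.2]
      rw [map_sum]
      refine Finset.sum_congr rfl fun j _ => ?_
      rw [map_smul, hcc j p.1, Module.Basis.coord_apply]
    rw [hrepr]
    apply continuous_finset_sum
    intro j _
    apply Continuous.smul
    · exact (LinearMap.continuous_of_finiteDimensional (B.coord j)).comp continuous_snd
    · apply continuous_finset_sum
      intro i _
      exact (continuous_fst.pow _).smul continuous_const
  -- the family map and uniform continuity on a compact set
  set Fam : (ℝ × 𝔤) × ℝ → 𝔤 := fun p => Adu (p.2 - p.1.1) p.1.2 with hFamdef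
  have hFamCont : Continuous Fam := by
    rw [hFamdef]
    have hφ : Continuous fun p : (ℝ × 𝔤) × ℝ => ((p.2 - p.1.1, p.1.2) : ℝ × 𝔤) :=
      (continuous_snd.sub (continuous_fst.comp continuous_fst)).prodMk
        (continuous_snd.comp continuous_fst)
    exact hcont2.comp hφ
  set K : Set ((ℝ × 𝔤) × ℝ) :=
    (Set.Icc 0 T ×ˢ Metric.closedBall 0 δ) ×ˢ Set.Icc 0 T with hKdef
  have hK : IsCompact K :=
    (isCompact_Icc.prod (isCompact_closedBall 0 δ)).prod isCompact_Icc
  have hUCfull : UniformContinuousOn Fam K :=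
    hK.uniformContinuousOn_of_continuous hFamCont.continuousOn
  obtain ⟨η, hη, hUC⟩ := Metric.uniformContinuousOn_iff.mp hUCfull ((r₀ - δ) / 2)
    (by linarith)
  -- witness predicate
  set W : G → ℝ → 𝔤 → Prop := fun γ t v =>
    γ ∈ Γ ∧ γ ≠ 1 ∧ t ∈ Set.Icc (0:ℝ) T ∧ ‖v‖ < δ ∧
      u t * (g * γ * g⁻¹) * (u t)⁻¹ = expMap v with hWdef
  -- key separation lemma: two witnesses for the same γ at close times give
  -- identical polynomial curves
  have hkey : ∀ (γ : G) t₀ v₀ t₁ v₁, W γ t₀ v₀ → W γ t₁ v₁ → |t₀ - t₁| < η →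
      (fun s => Adu (s - t₀) v₀) = (fun s => Adu (s - t₁) v₁) := by
    intro γ t₀ v₀ t₁ v₁ hW₀ hW₁ hlt
    obtain ⟨hγΓ, hγ1, ht₀, hv₀, heq₀⟩ := hW₀
    obtain ⟨-, -, ht₁, hv₁, heq₁⟩ := hW₁
    set f₀ : ℝ → 𝔤 := fun s => Adu (s - t₀) v₀ with hf₀def
    set f₁ : ℝ → 𝔤 := fun s => Adu (s - t₁) v₁ with hf₁def
    have hexp : ∀ s, expMap (f₀ s) = expMap (f₁ s) := by
      intro s
      rw [← hconj γ t₀ v₀ s heq₀, ← hconj γ t₁ v₁ s heq₁]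
    have hcf₀ : Continuous f₀ :=
      hcont2.comp ((continuous_id.sub continuous_const).prodMk continuous_const)
    have hcf₁ : Continuous f₁ :=
      hcont2.comp ((continuous_id.sub continuous_const).prodMk continuous_const)
    have hmem1 : ((t₀, v₀), t₁) ∈ K :=
      ⟨⟨ht₀, mem_closedBall_zero_iff.mpr hv₀.le⟩, ht₁⟩
    have hmem0 : ((t₀, v₀), t₀) ∈ K :=
      ⟨⟨ht₀, mem_closedBall_zero_iff.mpr hv₀.le⟩, ht₀⟩
    have hdist : dist (((t₀, v₀), t₁) : (ℝ × 𝔤) × ℝ) ((t₀, v₀), t₀) < η := by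
      rw [Prod.dist_eq]
      simp only [dist_self, Real.dist_eq]
      rw [max_eq_right (abs_nonneg _)]
      rwa [abs_sub_comm]
    have h1 : dist (f₀ t₁) v₀ < (r₀ - δ) / 2 := by
      have h := hUC _ hmem1 _ hmem0 hdist
      have e1 : Fam ((t₀, v₀), t₁) = f₀ t₁ := rfl
      have e2 : Fam ((t₀, v₀), t₀) = v₀ := by
        show Adu (t₀ - t₀) v₀ = v₀
        rw [sub_self, hAdu0]
      rwa [e1, e2] at h
    have hf₀t₁ : ‖f₀ t₁‖ < r₀ := by
      have h2 : ‖f₀ t₁ - v₀‖ < (r₀ - δ) / 2 := by rwa [← dist_eq_norm]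
      calc ‖f₀ t₁‖ = ‖(f₀ t₁ - v₀) + v₀‖ := by rw [sub_add_cancel]
        _ ≤ ‖f₀ t₁ - v₀‖ + ‖v₀‖ := norm_add_le _ _
        _ < (r₀ - δ) / 2 + δ := by linarith
        _ < r₀ := by linarith
    have hf₁t₁ : f₁ t₁ = v₁ := by
      show Adu (t₁ - t₁) v₁ = v₁
      rw [sub_self, hAdu0]
    have heqt₁ : f₀ t₁ = v₁ := by
      apply hinj (mem_ball_zero_iff.mpr hf₀t₁)
        (mem_ball_zero_iff.mpr (lt_trans hv₁ hδ))
      rw [hexp t₁, hf₁t₁]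
    have hopen : IsOpen {s : ℝ | ‖f₀ s‖ < r₀ ∧ ‖f₁ s‖ < r₀} := by
      apply IsOpen.inter
      · exact isOpen_lt (hcf₀.norm) continuous_const
      · exact isOpen_lt (hcf₁.norm) continuous_const
    have ht₁mem : t₁ ∈ {s : ℝ | ‖f₀ s‖ < r₀ ∧ ‖f₁ s‖ < r₀} := by
      constructor
      · exact hf₀t₁
      · rw [hf₁t₁]; exact lt_trans hv₁ hδ
    obtain ⟨ρ, hρ, hball⟩ := Metric.isOpen_iff.mp hopen t₁ ht₁mem
    have hagree : ∀ s ∈ Metric.ball t₁ ρ, f₀ s = f₁ s := by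
      intro s hs
      exact hinj (mem_ball_zero_iff.mpr (hball hs).1)
        (mem_ball_zero_iff.mpr (hball hs).2) (hexp s)
    obtain ⟨d₀, c₀, hc₀⟩ := hAdpoly v₀
    obtain ⟨d₁, c₁, hc₁⟩ := hAdpoly v₁
    obtain ⟨Q, hQ⟩ := aux_poly_diff d₀ d₁ c₀ c₁ t₀ t₁
    have hQeval : ∀ s, Q.eval s = ‖f₀ s - f₁ s‖ ^ 2 := by
      intro s
      rw [hQ s, ← hc₀, ← hc₁]
    have hQ0 : Q = 0 := by
      apply Polynomial.eq_zero_of_infinite_isRoot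
      apply Set.Infinite.mono (s := Set.Ioo (t₁ - ρ) (t₁ + ρ))
      · intro s hs
        have hsball : s ∈ Metric.ball t₁ ρ := by rw [Real.ball_eq_Ioo]; exact hs
        show Q.IsRoot s
        rw [Polynomial.IsRoot, hQeval s, hagree s hsball]
        simp
      · exact Set.Ioo_infinite (by linarith)
    funext s
    have h5 := hQeval s
    rw [hQ0] at h5
    simp only [Polynomial.eval_zero] at h5
    have h6 : f₀ s - f₁ s = 0 := by
      have : ‖f₀ s - f₁ s‖ = 0 := by
        nlinarith [norm_nonneg (f₀ s - f₁ s), sq_nonneg ‖f₀ s - f₁ s‖]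
      exact norm_eq_zero.mp this
    exact sub_eq_zero.mp h6
  -- finitely many relevant γ
  have hF : {γ : G | ∃ t v, W γ t v}.Finite := by
    by_contra hinf
    have hinf' : {γ : G | ∃ t v, W γ t v}.Infinite := hinf
    set e := hinf'.natEmbedding with he
    have hsel : ∀ n : ℕ, ∃ t v, W (e n : G) t v := fun n => (e n).2
    choose tt vv hWn using hsel
    set w : ℕ → 𝔤 := fun n => Adu (0 - tt n) (vv n) with hwdef
    have hwK : ∀ n, w n ∈ Fam '' K := by
      intro n
      refine ⟨((tt n, vv n), 0), ⟨⟨(hWn n).2.2.1,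
        mem_closedBall_zero_iff.mpr (hWn n).2.2.2.1.le⟩, ?_⟩, rfl⟩
      exact Set.left_mem_Icc.mpr hT.le
    have hbdd : Bornology.IsBounded (Fam '' K) := (hK.image hFamCont).isBounded
    obtain ⟨a, -, φ, hφmono, hφtend⟩ := tendsto_subseq_of_bounded hbdd hwK
    have hγw : ∀ n, (e n : G) = g⁻¹ * expMap (w n) * g := by
      intro n
      have h0 := hconj _ _ _ 0 (hWn n).2.2.2.2
      rw [hu0, one_mul, inv_one, mul_one] at h0
      rw [← h0]
      group
    obtain ⟨U, hUopen, hUpre⟩ : ∃ U : Set G, IsOpen U ∧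
        (Subtype.val ⁻¹' U : Set Γ) = {1} := by
      have h1 : IsOpen ({1} : Set Γ) := isOpen_discrete _
      exact isOpen_induced_iff.mp h1
    have h1U : (1 : G) ∈ U := by
      have h2 : (1 : Γ) ∈ (Subtype.val ⁻¹' U : Set Γ) := by
        rw [hUpre]; exact Set.mem_singleton _
      exact h2
    set Ψ : 𝔤 × 𝔤 → G := fun p => g⁻¹ * (expMap p.1 * (expMap p.2)⁻¹) * g with hΨdef
    have hΨcont : Continuous Ψ := by
      rw [hΨdef]
      apply Continuous.mul
      apply Continuous.mul continuous_const
      · exact ((hexpCont.comp continuous_fst).mul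
          ((hexpCont.comp continuous_snd).inv))
      · exact continuous_const
    have hΨaa : Ψ (a, a) = 1 := by
      rw [hΨdef]
      simp
    have htend : Filter.Tendsto (fun n => Ψ (w (φ n), w (φ (n + 1))))
        Filter.atTop (nhds (1 : G)) := by
      rw [← hΨaa]
      apply (hΨcont.tendsto (a, a)).comp
      exact Filter.Tendsto.prodMk_nhds hφtend
        (hφtend.comp (Filter.tendsto_add_atTop_nat 1))
    have hev : ∀ᶠ n in Filter.atTop, Ψ (w (φ n), w (φ (n + 1))) ∈ U :=
      htend.eventually (hUopen.mem_nhds h1U)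
    obtain ⟨n, hn⟩ := hev.exists
    have hprod : Ψ (w (φ n), w (φ (n + 1)))
        = (e (φ n) : G) * (e (φ (n + 1)) : G)⁻¹ := by
      rw [hγw (φ n), hγw (φ (n + 1)), hΨdef]
      group
    have hmemΓ : (e (φ n) : G) * (e (φ (n + 1)) : G)⁻¹ ∈ Γ :=
      mul_mem (hWn (φ n)).1 (inv_mem (hWn (φ (n + 1))).1)
    have hmemU : (⟨_, hmemΓ⟩ : Γ) ∈ (Subtype.val ⁻¹' U : Set Γ) := by
      show (e (φ n) : G) * (e (φ (n + 1)) : G)⁻¹ ∈ U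
      rw [← hprod]
      exact hn
    rw [hUpre] at hmemU
    have heq1 : (e (φ n) : G) * (e (φ (n + 1)) : G)⁻¹ = 1 :=
      congrArg Subtype.val hmemU
    have heq2 : e (φ n) = e (φ (n + 1)) :=
      Subtype.ext (mul_inv_eq_one.mp heq1)
    have heq3 := e.injective heq2
    exact absurd heq3 (Nat.ne_of_lt (hφmono (Nat.lt_succ_self n)))
  -- the sublevel sets associated to polynomial curves
  set E' : (ℝ → 𝔤) → Set ℝ := fun f => {s ∈ Set.Icc (0:ℝ) T | ‖f s‖ < δ} with hE'def
  -- pieces: connected components of sublevel sets at witnesses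
  set P : Set (Set ℝ) := {C | ∃ γ t₀ v₀, W γ t₀ v₀ ∧
    C = connectedComponentIn (E' (fun s => Adu (s - t₀) v₀)) t₀} with hPdef
  -- each E' at a witness is contained in S
  have hES : ∀ γ t₀ v₀, W γ t₀ v₀ → E' (fun s => Adu (s - t₀) v₀) ⊆ S := by
    intro γ t₀ v₀ hW₀ s hs
    obtain ⟨hγΓ, hγ1, ht₀, hv₀, heq₀⟩ := hW₀
    refine ⟨hs.1, γ, hγΓ, hγ1, Adu (s - t₀) v₀, mem_ball_zero_iff.mpr hs.2, ?_⟩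
    exact hconj γ t₀ v₀ s heq₀
  -- witnesses belong to their own sublevel set
  have hWE : ∀ γ t₀ v₀, W γ t₀ v₀ → t₀ ∈ E' (fun s => Adu (s - t₀) v₀) := by
    intro γ t₀ v₀ hW₀
    refine ⟨hW₀.2.2.1, ?_⟩
    show ‖Adu (t₀ - t₀) v₀‖ < δ
    rw [sub_self, hAdu0]
    exact hW₀.2.2.2.1
  -- finiteness of the set of pieces
  have hPfin : P.Finite := by
    -- per-γ pieces
    have hPγ : ∀ γ : G, {C | ∃ t₀ v₀, W γ t₀ v₀ ∧
        C = connectedComponentIn (E' (fun s => Adu (s - t₀) v₀)) t₀}.Finite := by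
      intro γ
      set Poly : Set (ℝ → 𝔤) :=
        {f | ∃ t₀ v₀, W γ t₀ v₀ ∧ f = fun s => Adu (s - t₀) v₀} with hPolydef
      -- finitely many polynomial curves for a fixed γ
      have hPolyFin : Poly.Finite := by
        set σ : (ℝ → 𝔤) → ℝ := fun f => if h : f ∈ Poly then h.choose else 0 with hσdef
        have hσ : ∀ f (h : f ∈ Poly), ∃ v₀, W γ (σ f) v₀ ∧
            f = fun s => Adu (s - σ f) v₀ := by
          intro f h
          have : σ f = h.choose := by rw [hσdef]; exact dif_pos h
          rw [this]
          exact h.choose_spec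
        have hsep : ∀ f ∈ Poly, ∀ f' ∈ Poly, f ≠ f' → η ≤ |σ f - σ f'| := by
          intro f hf f' hf' hne
          by_contra hlt
          push_neg at hlt
          obtain ⟨v₀, hW₀, hfeq⟩ := hσ f hf
          obtain ⟨v₁, hW₁, hfeq'⟩ := hσ f' hf'
          exact hne (by rw [hfeq, hfeq']; exact hkey γ _ _ _ _ hW₀ hW₁ hlt)
        have hinjσ : Set.InjOn σ Poly := by
          intro f hf f' hf' heq
          by_contra hne
          have h2 := hsep f hf f' hf' hne
          rw [heq, sub_self, abs_zero] at h2
          linarith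
        apply Set.Finite.of_finite_image _ hinjσ
        apply aux_sep_finite hη (T := T)
        · rintro z ⟨f, hf, rfl⟩
          obtain ⟨v₀, hW₀, -⟩ := hσ f hf
          exact hW₀.2.2.1
        · rintro z ⟨f, hf, rfl⟩ z' ⟨f', hf', rfl⟩ hzz
          apply hsep f hf f' hf'
          intro hee
          rw [hee] at hzz
          exact hzz rfl
      -- each sublevel set has finitely many components
      have hcompfin : ∀ f ∈ Poly,
          {C | ∃ s ∈ E' f, C = connectedComponentIn (E' f) s}.Finite := by
        intro f hf
        obtain ⟨t₀, v₀, hW₀, hfeq⟩ := hf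
        obtain ⟨d, c, hc⟩ := hAdpoly v₀
        obtain ⟨q, hq⟩ := aux_poly_normsq d c t₀
        have hfs : ∀ s, f s = ∑ i : Fin d, (s - t₀) ^ (i : ℕ) • c i := by
          intro s
          rw [hfeq, ← hc]
        set cf : ℝ → ℝ := fun s => ‖f s‖ ^ 2 - δ ^ 2 with hcfdef
        have hcfc : Continuous cf := by
          have hfc : Continuous f := by
            rw [hfeq]
            exact hcont2.comp
              ((continuous_id.sub continuous_const).prodMk continuous_const)
          exact ((hfc.norm).pow 2).sub continuous_const
        have hzfin : {x : ℝ | cf x = 0}.Finite := by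
          set Q : Polynomial ℝ := q - Polynomial.C (δ ^ 2) with hQdef
          have hQeval : ∀ s, Q.eval s = cf s := by
            intro s
            rw [hQdef]
            simp only [Polynomial.eval_sub, Polynomial.eval_C]
            rw [hq s, ← hfs s, hcfdef]
          have hQne : Q ≠ 0 := by
            intro hQ0
            have h3 := hQeval t₀
            rw [hQ0] at h3
            simp only [Polynomial.eval_zero] at h3
            have h4 : f t₀ = v₀ := by
              rw [hfeq]
              show Adu (t₀ - t₀) v₀ = v₀
              rw [sub_self, hAdu0]
            rw [hcfdef] at h3
            simp only at h3
            rw [h4] at h3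
            have hv₀δ : ‖v₀‖ < δ := hW₀.2.2.2.1
            nlinarith [norm_nonneg v₀]
          have : {x : ℝ | cf x = 0} = {x : ℝ | Q.IsRoot x} := by
            ext x
            simp only [Set.mem_setOf_eq, Polynomial.IsRoot, hQeval x]
          rw [this]
          exact Polynomial.finite_setOf_isRoot hQne
        have hEeq : E' f = {s ∈ Set.Icc (0:ℝ) T | cf s < 0} := by
          ext s
          simp only [hE'def, hcfdef, Set.mem_setOf_eq]
          constructor
          · rintro ⟨h1, h2⟩
            exact ⟨h1, by nlinarith [norm_nonneg (f s)]⟩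
          · rintro ⟨h1, h2⟩
            refine ⟨h1, ?_⟩
            nlinarith [norm_nonneg (f s)]
        rw [hEeq]
        exact aux_sublevel hT hcfc hzfin
      -- assemble over the finitely many polynomial curves
      apply Set.Finite.subset (Set.Finite.biUnion hPolyFin
        (fun f hf => hcompfin f hf))
      rintro C ⟨t₀, v₀, hW₀, rfl⟩
      apply Set.mem_biUnion (show (fun s => Adu (s - t₀) v₀) ∈ Poly from
        ⟨t₀, v₀, hW₀, rfl⟩)
      exact ⟨t₀, hWE γ t₀ v₀ hW₀, rfl⟩
    apply Set.Finite.subset (Set.Finite.biUnion hF (fun γ (_ : γ ∈ _) => hPγ γ))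
    rintro C ⟨γ, t₀, v₀, hW₀, rfl⟩
    apply Set.mem_biUnion (show γ ∈ {γ : G | ∃ t v, W γ t v} from ⟨t₀, v₀, hW₀⟩)
    exact ⟨t₀, v₀, hW₀, rfl⟩
  -- apply the covering lemma
  apply aux_comp_finite_of_cover hPfin
  · rintro p ⟨γ, t₀, v₀, hW₀, rfl⟩
    constructor
    · exact (connectedComponentIn_subset _ _).trans (hES γ t₀ v₀ hW₀)
    · exact isPreconnected_connectedComponentIn
  · intro t ht
    obtain ⟨htIcc, γ, hγΓ, hγ1, v, hv, heqv⟩ := ht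
    have hWt : W γ t v := ⟨hγΓ, hγ1, htIcc, mem_ball_zero_iff.mp hv, heqv⟩
    refine ⟨connectedComponentIn (E' (fun s => Adu (s - t) v)) t,
      ⟨γ, t, v, hWt, rfl⟩, ?_⟩
    exact mem_connectedComponentIn (hWE γ t v hWt)
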